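/- arXiv:2104.11663 — 3 statements merged into one kernel-verified Lean document; each statement's English description precedes it below -/
import Mathlib

section
/- If ℓ⁰ ∈ ℝⁿ is nondecreasing, L > 0, and t₀ is the unique index with L ∈ (Δ_{t₀}, Δ_{t₀+1}] where Δ_t = t·ℓ⁰_{t+1} − ∑_{s≤t} ℓ⁰_s and Δ_n = +∞, then the vector ℓ defined by ℓ_t = (L + ∑_{s=1}^{t₀} ℓ⁰_s)/t₀ − ℓ⁰_t for t ≤ t₀ and ℓ_t = 0 for t > t₀ satisfies ℓ_t ≥ 0 for all t and ∑_t ℓ_t = L. -/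
/-- Feasibility of the explicit water-filling formula. -/
theorem stmt2 (n : ℕ) (ℓ0 : ℕ → ℝ)
    (hmono : ∀ s t, 1 ≤ s → s ≤ t → t ≤ n → ℓ0 s ≤ ℓ0 t)
    (L : ℝ) (hL : 0 < L)
    (Δ : ℕ → EReal)
    (hΔ : ∀ t, t < n →
      Δ t = (((t : ℝ) * ℓ0 (t + 1) - ∑ s ∈ Finset.Icc 1 t, ℓ0 s : ℝ) : EReal))
    (hΔtop : ∀ t, n ≤ t → Δ t = ⊤)
    (t₀ : ℕ) (ht₀1 : 1 ≤ t₀) (ht₀n : t₀ ≤ n)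
    (hlo : Δ t₀ < ((L : ℝ) : EReal)) (hhi : ((L : ℝ) : EReal) ≤ Δ (t₀ + 1))
    (ℓ : ℕ → ℝ)
    (hℓ : ∀ t, ℓ t =
      if t ≤ t₀ then (L + ∑ s ∈ Finset.Icc 1 t₀, ℓ0 s) / (t₀ : ℝ) - ℓ0 t else 0) :
    (∀ t, 1 ≤ t → t ≤ n → 0 ≤ ℓ t) ∧ (∑ t ∈ Finset.Icc 1 n, ℓ t = L) := by
  set S : ℝ := ∑ s ∈ Finset.Icc 1 t₀, ℓ0 s with hS
  have ht₀lt : t₀ < n := by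
    by_contra h
    rw [hΔtop t₀ (le_of_not_gt h)] at hlo
    exact (not_top_lt hlo)
  have hkey : (t₀ : ℝ) * ℓ0 (t₀ + 1) - S < L := by
    rw [hΔ t₀ ht₀lt] at hlo
    exact_mod_cast hlo
  have ht₀pos : (0:ℝ) < (t₀ : ℝ) := by exact_mod_cast ht₀1
  have hlevel : ℓ0 (t₀ + 1) ≤ (L + S) / (t₀ : ℝ) := by
    rw [le_div_iff₀ ht₀pos]
    nlinarith
  constructor
  · intro t ht1 htn
    rw [hℓ t]
    split_ifs with h
    · have h1 : ℓ0 t ≤ ℓ0 (t₀ + 1) :=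
        hmono t (t₀ + 1) ht1 (le_trans h (Nat.le_succ _)) ht₀lt
      linarith
    · exact le_refl 0
  · have hsplit : Finset.Icc 1 n = Finset.Icc 1 t₀ ∪ Finset.Icc (t₀+1) n := by
      ext a
      simp only [Finset.mem_union, Finset.mem_Icc]
      omega
    rw [hsplit, Finset.sum_union (by
      rw [Finset.disjoint_left]
      intro a ha hb
      simp only [Finset.mem_Icc] at ha hb
      omega)]
    have h2 : ∑ t ∈ Finset.Icc (t₀+1) n, ℓ t = 0 := by
      apply Finset.sum_eq_zero
      intro t ht
      simp only [Finset.mem_Icc] at ht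
      rw [hℓ t, if_neg (by omega)]
    have h1 : ∑ t ∈ Finset.Icc 1 t₀, ℓ t = L := by
      have : ∀ t ∈ Finset.Icc 1 t₀, ℓ t = (L + S) / (t₀ : ℝ) - ℓ0 t := by
        intro t ht
        simp only [Finset.mem_Icc] at ht
        rw [hℓ t, if_pos ht.2]
      rw [Finset.sum_congr rfl this, Finset.sum_sub_distrib, ← hS,
        Finset.sum_const, Nat.card_Icc]
      simp only [Nat.add_sub_cancel, nsmul_eq_mul]
      field_simp
      ring
    rw [h1, h2, add_zero]
end

section
/- The optimal value of the water-filling problem and its optimal solution set do not depend on the choice of the increasing convex function f: for any two increasing strictly convex differentiable functions f and g, a feasible vector ℓ (with ∑ ℓ_t = L, ℓ_t ≥ 0) minimizes ∑_t f(ℓ⁰_t + ℓ_t) if and only if it minimizes ∑_t g(ℓ⁰_t + ℓ_t). -/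
/-- Gradient inequality for a convex differentiable function. -/
lemma grad_ineq {f : ℝ → ℝ} (hc : ConvexOn ℝ Set.univ f) (hd : Differentiable ℝ f)
    (x y : ℝ) : f x + deriv f x * (y - x) ≤ f y := by
  rcases lt_trichotomy x y with h | h | h
  · have := hc.deriv_le_slope (Set.mem_univ x) (Set.mem_univ y) h (hd x)
    rw [slope_def_field] at this
    have hxy : (0:ℝ) < y - x := by linarith
    rw [le_div_iff₀ hxy] at this
    nlinarith
  · simp [h]
  · have := hc.slope_le_deriv (Set.mem_univ y) (Set.mem_univ x) h (hd x)
    rw [slope_def_field] at this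
    have hxy : (0:ℝ) < x - y := by linarith
    rw [div_le_iff₀ hxy] at this
    nlinarith

/-- Moving mass `ε` from a higher level `b` to a lower level `a` strictly decreases
a strictly convex cost. -/
lemma sconv_swap {f : ℝ → ℝ} (hf : StrictConvexOn ℝ Set.univ f) {a b ε : ℝ}
    (hε : 0 < ε) (h : 3 * ε ≤ b - a) : f (a + ε) + f (b - ε) < f a + f b := by
  have hab : a < b := by linarith
  have hba : (0:ℝ) < b - a := by linarith
  obtain ⟨w, hw⟩ : ∃ w : ℝ, w = ε / (b - a) := ⟨_, rfl⟩
  have hθ0 : 0 < w := hw ▸ div_pos hε hba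
  have hθ1 : w < 1 := by rw [hw, div_lt_one hba]; linarith
  have hθe : w * (b - a) = ε := by rw [hw]; exact div_mul_cancel₀ _ (ne_of_gt hba)
  have h1 := hf.2 (Set.mem_univ a) (Set.mem_univ b) (ne_of_lt hab)
    (show (0:ℝ) < 1 - w by linarith) hθ0 (by ring)
  have h2 := hf.2 (Set.mem_univ a) (Set.mem_univ b) (ne_of_lt hab)
    hθ0 (show (0:ℝ) < 1 - w by linarith) (by ring)
  simp only [smul_eq_mul] at h1 h2
  have e1 : (1 - w) * a + w * b = a + ε := by nlinarith [hθe]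
  have e2 : w * a + (1 - w) * b = b - ε := by nlinarith [hθe]
  rw [e1] at h1
  rw [e2] at h2
  linarith

/-- A feasible point is a minimizer of the convex cost iff it satisfies the
water-filling condition (which does not depend on `f`). -/
lemma min_iff_wf {n : ℕ} {f : ℝ → ℝ}
    (hf_conv : StrictConvexOn ℝ Set.univ f) (hf_diff : Differentiable ℝ f)
    (ℓ0 : Fin n → ℝ) (L : ℝ) (hL : 0 < L)
    (ℓ : Fin n → ℝ) (hpos : ∀ t, 0 ≤ ℓ t) (hsum : ∑ t, ℓ t = L) :
    (∀ m : Fin n → ℝ, (∀ t, 0 ≤ m t) → (∑ t, m t = L) →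
        ∑ t, f (ℓ0 t + ℓ t) ≤ ∑ t, f (ℓ0 t + m t)) ↔
    (∀ s t, 0 < ℓ s → ℓ0 s + ℓ s ≤ ℓ0 t + ℓ t) := by
  constructor
  · intro hmin s t hs
    by_contra hcon
    push_neg at hcon
    have hst : s ≠ t := by
      intro h; subst h; exact lt_irrefl _ hcon
    have hts' : t ≠ s := Ne.symm hst
    set ε : ℝ := min (ℓ s) ((ℓ0 s + ℓ s - (ℓ0 t + ℓ t)) / 3) with hε
    have hε0 : 0 < ε := lt_min hs (by linarith)
    have hεs : ε ≤ ℓ s := min_le_left _ _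
    have hε3 : ε ≤ (ℓ0 s + ℓ s - (ℓ0 t + ℓ t)) / 3 := min_le_right _ _
    set m : Fin n → ℝ := fun u =>
      ℓ u - (if u = s then ε else 0) + (if u = t then ε else 0) with hm
    have hmpos : ∀ u, 0 ≤ m u := by
      intro u
      by_cases h1 : u = s
      · simp [hm, h1, hst]; linarith
      · by_cases h2 : u = t
        · simp [hm, h1, h2, hts']; have := hpos t; linarith
        · simp [hm, h1, h2]; exact hpos u
    have hmsum : ∑ u, m u = L := by
      simp only [hm, Finset.sum_add_distrib, Finset.sum_sub_distrib,
        Finset.sum_ite_eq' Finset.univ, Finset.mem_univ, if_true]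
      linarith
    have hineq := hmin m hmpos hmsum
    have hts : t ∈ Finset.univ.erase s := Finset.mem_erase.2 ⟨hts', Finset.mem_univ t⟩
    have hsplit : ∀ (F : Fin n → ℝ), ∑ u, F u =
        F s + F t + ∑ u ∈ (Finset.univ.erase s).erase t, F u := by
      intro F
      rw [← Finset.add_sum_erase _ F (Finset.mem_univ s), ← Finset.add_sum_erase _ F hts]
      ring
    have hrest : ∑ u ∈ (Finset.univ.erase s).erase t, f (ℓ0 u + m u) =
        ∑ u ∈ (Finset.univ.erase s).erase t, f (ℓ0 u + ℓ u) := by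
      apply Finset.sum_congr rfl
      intro u hu
      have hu1 : u ≠ t := (Finset.mem_erase.1 hu).1
      have hu2 : u ≠ s := (Finset.mem_erase.1 (Finset.mem_erase.1 hu).2).1
      simp [hm, hu1, hu2]
    have hms : ℓ0 s + m s = (ℓ0 s + ℓ s) - ε := by simp [hm, hst]; ring
    have hmt : ℓ0 t + m t = (ℓ0 t + ℓ t) + ε := by simp [hm, hts']; ring
    have hkey : f ((ℓ0 t + ℓ t) + ε) + f ((ℓ0 s + ℓ s) - ε) <
        f (ℓ0 t + ℓ t) + f (ℓ0 s + ℓ s) :=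
      sconv_swap hf_conv hε0 (by linarith)
    have hL1 := hsplit (fun u => f (ℓ0 u + m u))
    have hL2 := hsplit (fun u => f (ℓ0 u + ℓ u))
    rw [hms, hmt] at hL1
    rw [hL1, hL2, hrest] at hineq
    linarith
  · intro hwf m hmpos hmsum
    have hex : ∃ s, 0 < ℓ s := by
      by_contra h
      push_neg at h
      have : ∑ t, ℓ t = 0 := Finset.sum_eq_zero fun t _ => le_antisymm (h t) (hpos t)
      rw [hsum] at this; linarith
    obtain ⟨s, hs⟩ := hex
    have hder : ∀ t, f (ℓ0 t + ℓ t) + deriv f (ℓ0 s + ℓ s) * (m t - ℓ t) ≤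
        f (ℓ0 t + m t) := by
      intro t
      have hgi := grad_ineq hf_conv.convexOn hf_diff (ℓ0 t + ℓ t) (ℓ0 t + m t)
      have hdiff : (ℓ0 t + m t) - (ℓ0 t + ℓ t) = m t - ℓ t := by ring
      rw [hdiff] at hgi
      rcases le_or_gt (ℓ t) (m t) with h | h
      · have hlev : ℓ0 s + ℓ s ≤ ℓ0 t + ℓ t := hwf s t hs
        have hmono : deriv f (ℓ0 s + ℓ s) ≤ deriv f (ℓ0 t + ℓ t) :=
          hf_conv.convexOn.monotoneOn_deriv (fun x _ => hf_diff x)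
            (Set.mem_univ _) (Set.mem_univ _) hlev
        nlinarith
      · have hts : 0 < ℓ t := lt_of_le_of_lt (hmpos t) h
        have h1 : ℓ0 t + ℓ t ≤ ℓ0 s + ℓ s := hwf t s hts
        have h2 : ℓ0 s + ℓ s ≤ ℓ0 t + ℓ t := hwf s t hs
        have heq : ℓ0 t + ℓ t = ℓ0 s + ℓ s := le_antisymm h1 h2
        rw [← heq]
        exact hgi
    calc ∑ t, f (ℓ0 t + ℓ t)
        = ∑ t, (f (ℓ0 t + ℓ t) + deriv f (ℓ0 s + ℓ s) * (m t - ℓ t)) := by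
          rw [Finset.sum_add_distrib, ← Finset.mul_sum, Finset.sum_sub_distrib,
            hmsum, hsum]
          ring
      _ ≤ ∑ t, f (ℓ0 t + m t) := Finset.sum_le_sum fun t _ => hder t

/-- The optimal charging profile does not depend on the choice of the increasing
strictly convex differentiable cost function. -/
theorem stmt3 (n : ℕ) (f g : ℝ → ℝ)
    (hf_mono : StrictMono f) (hf_conv : StrictConvexOn ℝ Set.univ f)
    (hf_diff : Differentiable ℝ f)
    (hg_mono : StrictMono g) (hg_conv : StrictConvexOn ℝ Set.univ g)
    (hg_diff : Differentiable ℝ g)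
    (ℓ0 : Fin n → ℝ) (L : ℝ) (hL : 0 < L)
    (ℓ : Fin n → ℝ) (hpos : ∀ t, 0 ≤ ℓ t) (hsum : ∑ t, ℓ t = L) :
    ((∀ m : Fin n → ℝ, (∀ t, 0 ≤ m t) → (∑ t, m t = L) →
        ∑ t, f (ℓ0 t + ℓ t) ≤ ∑ t, f (ℓ0 t + m t)) ↔
     (∀ m : Fin n → ℝ, (∀ t, 0 ≤ m t) → (∑ t, m t = L) →
        ∑ t, g (ℓ0 t + ℓ t) ≤ ∑ t, g (ℓ0 t + m t))) := by
  rw [min_iff_wf hf_conv hf_diff ℓ0 L hL ℓ hpos hsum,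
    min_iff_wf hg_conv hg_diff ℓ0 L hL ℓ hpos hsum]
end

section
/- Consider two EV classes with nested availability windows {1,...,d₁} ⊆ {1,...,d₂} (d₁ ≤ d₂), demands L₁, L₂ > 0, nonflexible load ℓ⁰, and f convex increasing differentiable. Let ℓ¹ be the water-filling solution for demand L₁ on slots {1,...,d₁} against base load ℓ⁰, and let ℓ² be the water-filling solution for demand L₂ on slots {1,...,d₂} against the fictitious base load ℓ⁰ + ℓ¹ (extending ℓ¹ by zero beyond d₁). Then the pair (ℓ¹, ℓ²) minimizes ∑_{t=1}^{d₂} f(ℓ⁰_t + ℓ¹_t + ℓ²_t) over all pairs of feasible profiles (ℓ¹ supported on {1,...,d₁}, nonnegative, summing to L₁; ℓ² supported on {1,...,d₂}, nonnegative, summing to L₂). -/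
open Filter Topology Set

/-- Gradient inequality for differentiable convex functions on ℝ. -/
lemma grad_ineq6 {f : ℝ → ℝ} (hc : ConvexOn ℝ Set.univ f) (hd : Differentiable ℝ f)
    (a b : ℝ) : deriv f a * (b - a) ≤ f b - f a := by
  rcases lt_trichotomy a b with h | rfl | h
  · have hba : (0:ℝ) < b - a := by linarith
    have h1 := hc.deriv_le_slope (Set.mem_univ a) (Set.mem_univ b) h (hd a)
    rw [slope_def_field, le_div_iff₀ hba] at h1
    exact h1
  · simp
  · have hba : (0:ℝ) < a - b := by linarith
    have h1 := hc.slope_le_deriv (Set.mem_univ b) (Set.mem_univ a) h (hd a)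
    rw [slope_def_field, div_le_iff₀ hba] at h1
    have e : deriv f a * (b - a) = -(deriv f a * (a - b)) := by ring
    linarith

/-- Key limit lemma: if moving mass ε from v to u never decreases the cost,
then the derivative at v is at most the derivative at u. -/
lemma kl6 {f : ℝ → ℝ} (hd : Differentiable ℝ f) {u v δ : ℝ} (hδ : 0 < δ)
    (h : ∀ ε ∈ Set.Ioc (0:ℝ) δ, f u + f v ≤ f (u + ε) + f (v - ε)) :
    deriv f v ≤ deriv f u := by
  have hu : Tendsto (fun ε : ℝ => slope f u (u + ε)) (𝓝[>] (0:ℝ)) (𝓝 (deriv f u)) := by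
    have h1 : Tendsto (slope f u) (𝓝[≠] u) (𝓝 (deriv f u)) :=
      hasDerivAt_iff_tendsto_slope.mp (hd u).hasDerivAt
    refine h1.comp ?_
    apply tendsto_nhdsWithin_of_tendsto_nhds_of_eventually_within
    · have : Tendsto (fun ε : ℝ => u + ε) (𝓝 0) (𝓝 (u + 0)) :=
        (continuous_const.add continuous_id).tendsto 0
      simpa using this.mono_left nhdsWithin_le_nhds
    · filter_upwards [self_mem_nhdsWithin] with ε (hε : ε ∈ Set.Ioi (0:ℝ))
      have h0 : (0:ℝ) < ε := hε
      simp only [Set.mem_compl_iff, Set.mem_singleton_iff]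
      exact ne_of_gt (lt_add_of_pos_right u h0)
  have hv : Tendsto (fun ε : ℝ => slope f v (v - ε)) (𝓝[>] (0:ℝ)) (𝓝 (deriv f v)) := by
    have h1 : Tendsto (slope f v) (𝓝[≠] v) (𝓝 (deriv f v)) :=
      hasDerivAt_iff_tendsto_slope.mp (hd v).hasDerivAt
    refine h1.comp ?_
    apply tendsto_nhdsWithin_of_tendsto_nhds_of_eventually_within
    · have : Tendsto (fun ε : ℝ => v - ε) (𝓝 0) (𝓝 (v - 0)) :=
        (continuous_const.sub continuous_id).tendsto 0
      simpa using this.mono_left nhdsWithin_le_nhds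
    · filter_upwards [self_mem_nhdsWithin] with ε (hε : ε ∈ Set.Ioi (0:ℝ))
      have h0 : (0:ℝ) < ε := hε
      simp only [Set.mem_compl_iff, Set.mem_singleton_iff]
      exact ne_of_lt (by linarith)
  refine le_of_tendsto_of_tendsto hv hu ?_
  filter_upwards [Ioc_mem_nhdsGT_of_mem ⟨le_refl 0, hδ⟩] with ε hε
  have hε0 : (0:ℝ) < ε := hε.1
  have key := h ε hε
  rw [slope_def_field, slope_def_field]
  have e1 : f (u + ε) - f u = f (u + ε) - f u := rfl
  have e2 : (f (v - ε) - f v) / (v - ε - v) = (f v - f (v - ε)) / ε := by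
    rw [show v - ε - v = -ε by ring]
    rw [div_eq_div_iff (by linarith) (by linarith)]
    ring
  rw [e2, show u + ε - u = ε by ring]
  exact (div_le_div_iff_of_pos_right hε0).mpr (by linarith)

/-- Exchange lemma: at a minimizer of a separable convex cost over the simplex,
the derivative at any active coordinate is minimal. -/
lemma exch6 {f : ℝ → ℝ} (hc : ConvexOn ℝ Set.univ f) (hd : Differentiable ℝ f)
    (S : Finset ℕ) (C x : ℕ → ℝ) (L : ℝ)
    (hxpos : ∀ u, 0 ≤ x u)
    (hxsum : ∑ u ∈ S, x u = L)
    (hopt : ∀ y : ℕ → ℝ, (∀ u, 0 ≤ y u) → (∀ u, u ∉ S → y u = 0) →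
      (∑ u ∈ S, y u = L) → ∑ u ∈ S, f (C u + x u) ≤ ∑ u ∈ S, f (C u + y u))
    (hxsupp : ∀ u, u ∉ S → x u = 0)
    {s t : ℕ} (hs : s ∈ S) (ht : t ∈ S) (hxt : 0 < x t) :
    deriv f (C t + x t) ≤ deriv f (C s + x s) := by
  rcases eq_or_ne s t with rfl | hst
  · exact le_refl _
  refine kl6 hd hxt ?_
  intro ε hε
  set y : ℕ → ℝ := fun u => x u + (if u = s then ε else 0) - (if u = t then ε else 0) with hy
  have hys : y s = x s + ε := by simp [hy, hst]
  have hyt : y t = x t - ε := by simp [hy, Ne.symm hst]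
  have hyo : ∀ u, u ≠ s → u ≠ t → y u = x u := by
    intro u h1 h2; simp [hy, h1, h2]
  have hypos : ∀ u, 0 ≤ y u := by
    intro u
    rcases eq_or_ne u s with rfl | h1
    · rw [hys]; linarith [hxpos u, hε.1]
    rcases eq_or_ne u t with rfl | h2
    · rw [hyt]; linarith [hε.2]
    · rw [hyo u h1 h2]; exact hxpos u
  have hysupp : ∀ u, u ∉ S → y u = 0 := by
    intro u hu
    rw [hyo u (fun h => hu (h ▸ hs)) (fun h => hu (h ▸ ht))]
    exact hxsupp u hu
  have hysum : ∑ u ∈ S, y u = L := by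
    simp only [hy]
    rw [Finset.sum_sub_distrib, Finset.sum_add_distrib, Finset.sum_ite_eq' S s (fun _ => ε),
      Finset.sum_ite_eq' S t (fun _ => ε), if_pos hs, if_pos ht, hxsum]
    ring
  have hle := hopt y hypos hysupp hysum
  have hdiff : (0:ℝ) ≤ ∑ u ∈ S, (f (C u + y u) - f (C u + x u)) := by
    rw [Finset.sum_sub_distrib]; linarith
  have hsub : ({s, t} : Finset ℕ) ⊆ S := by
    intro u hu
    rcases Finset.mem_insert.mp hu with rfl | hu
    · exact hs
    · exact (Finset.mem_singleton.mp hu) ▸ ht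
  have hzero : ∀ u ∈ S, u ∉ ({s, t} : Finset ℕ) →
      f (C u + y u) - f (C u + x u) = 0 := by
    intro u _ hu
    have h1 : u ≠ s := fun h => hu (by simp [h])
    have h2 : u ≠ t := fun h => hu (by simp [h])
    rw [hyo u h1 h2]; ring
  rw [← Finset.sum_subset hsub hzero] at hdiff
  rw [Finset.sum_pair hst, hys, hyt] at hdiff
  have : C s + x s + ε = C s + (x s + ε) := by ring
  have h2 : C t + x t - ε = C t + (x t - ε) := by ring
  rw [this, h2]
  linarith

/-- Two-class case of Proposition 1: sequential water filling over nested
windows {1,...,d₁} ⊆ {1,...,d₂} is jointly optimal. -/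
theorem stmt6 (d₁ d₂ : ℕ) (hd₁ : 1 ≤ d₁) (hd : d₁ ≤ d₂)
    (f : ℝ → ℝ) (hf_mono : StrictMono f) (hf_conv : ConvexOn ℝ Set.univ f)
    (hf_diff : Differentiable ℝ f)
    (ℓ0 : ℕ → ℝ) (L₁ L₂ : ℝ) (hL₁ : 0 < L₁) (hL₂ : 0 < L₂)
    (l1 l2 : ℕ → ℝ)
    (h1pos : ∀ t, 0 ≤ l1 t) (h1supp : ∀ t, t ∉ Finset.Icc 1 d₁ → l1 t = 0)
    (h1sum : ∑ t ∈ Finset.Icc 1 d₁, l1 t = L₁)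
    (h1opt : ∀ x : ℕ → ℝ, (∀ t, 0 ≤ x t) → (∀ t, t ∉ Finset.Icc 1 d₁ → x t = 0) →
      (∑ t ∈ Finset.Icc 1 d₁, x t = L₁) →
      ∑ t ∈ Finset.Icc 1 d₁, f (ℓ0 t + l1 t) ≤ ∑ t ∈ Finset.Icc 1 d₁, f (ℓ0 t + x t))
    (h2pos : ∀ t, 0 ≤ l2 t) (h2supp : ∀ t, t ∉ Finset.Icc 1 d₂ → l2 t = 0)
    (h2sum : ∑ t ∈ Finset.Icc 1 d₂, l2 t = L₂)
    (h2opt : ∀ x : ℕ → ℝ, (∀ t, 0 ≤ x t) → (∀ t, t ∉ Finset.Icc 1 d₂ → x t = 0) →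
      (∑ t ∈ Finset.Icc 1 d₂, x t = L₂) →
      ∑ t ∈ Finset.Icc 1 d₂, f (ℓ0 t + l1 t + l2 t) ≤
        ∑ t ∈ Finset.Icc 1 d₂, f (ℓ0 t + l1 t + x t)) :
    ∀ m1 m2 : ℕ → ℝ,
      (∀ t, 0 ≤ m1 t) → (∀ t, t ∉ Finset.Icc 1 d₁ → m1 t = 0) →
      (∑ t ∈ Finset.Icc 1 d₁, m1 t = L₁) →
      (∀ t, 0 ≤ m2 t) → (∀ t, t ∉ Finset.Icc 1 d₂ → m2 t = 0) →
      (∑ t ∈ Finset.Icc 1 d₂, m2 t = L₂) →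
      ∑ t ∈ Finset.Icc 1 d₂, f (ℓ0 t + l1 t + l2 t) ≤
        ∑ t ∈ Finset.Icc 1 d₂, f (ℓ0 t + m1 t + m2 t) := by
  intro m1 m2 hm1pos hm1supp hm1sum hm2pos hm2supp hm2sum
  set S₁ := Finset.Icc 1 d₁ with hS₁
  set S₂ := Finset.Icc 1 d₂ with hS₂
  have hsub : S₁ ⊆ S₂ := Finset.Icc_subset_Icc_right hd
  set g : ℕ → ℝ := fun t => deriv f (ℓ0 t + l1 t + l2 t) with hg
  -- derivative is monotone
  have hdm : Monotone (deriv f) := by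
    have := hf_conv.monotoneOn_deriv (fun x _ => hf_diff x)
    exact fun a b hab => this (Set.mem_univ a) (Set.mem_univ b) hab
  -- exchange for class 2
  have hB2 : ∀ t ∈ S₂, 0 < l2 t → ∀ s ∈ S₂, g t ≤ g s := by
    intro t ht hlt s hs
    exact exch6 hf_conv hf_diff S₂ (fun u => ℓ0 u + l1 u) l2 L₂ h2pos h2sum h2opt h2supp hs ht hlt
  -- exchange for class 1 (combined)
  have hB1 : ∀ t ∈ S₁, 0 < l1 t → ∀ s ∈ S₁, g t ≤ g s := by
    intro t ht hlt s hs
    rcases (h2pos t).lt_or_eq with hl2 | hl2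
    · exact hB2 t (hsub ht) hl2 s (hsub hs)
    · have h1 : deriv f (ℓ0 t + l1 t) ≤ deriv f (ℓ0 s + l1 s) :=
        exch6 hf_conv hf_diff S₁ ℓ0 l1 L₁ h1pos h1sum h1opt h1supp hs ht hlt
      have h2 : deriv f (ℓ0 s + l1 s) ≤ deriv f (ℓ0 s + l1 s + l2 s) :=
        hdm (by linarith [h2pos s])
      simp only [hg, ← hl2, add_zero]
      linarith
  -- pivots
  have ht₂ : ∃ t ∈ S₂, 0 < l2 t := by
    by_contra hcon
    push_neg at hcon
    have : ∑ t ∈ S₂, l2 t ≤ 0 := Finset.sum_nonpos (fun t ht => hcon t ht)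
    linarith [h2sum ▸ this]
  have ht₁ : ∃ t ∈ S₁, 0 < l1 t := by
    by_contra hcon
    push_neg at hcon
    have : ∑ t ∈ S₁, l1 t ≤ 0 := Finset.sum_nonpos (fun t ht => hcon t ht)
    linarith [h1sum ▸ this]
  obtain ⟨t₂, ht₂S, ht₂pos⟩ := ht₂
  obtain ⟨t₁, ht₁S, ht₁pos⟩ := ht₁
  set lam := g t₂ with hlam
  set mu := g t₁ with hmu
  have hlam_min : ∀ s ∈ S₂, lam ≤ g s := hB2 t₂ ht₂S ht₂pos
  have hmu_min : ∀ s ∈ S₁, mu ≤ g s := hB1 t₁ ht₁S ht₁pos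
  have hlam_eq : ∀ t ∈ S₂, 0 < l2 t → g t = lam :=
    fun t ht hpos => le_antisymm (hB2 t ht hpos t₂ ht₂S) (hlam_min t ht)
  have hmu_eq : ∀ t ∈ S₁, 0 < l1 t → g t = mu :=
    fun t ht hpos => le_antisymm (hB1 t ht hpos t₁ ht₁S) (hmu_min t ht)
  -- sums of g * l1, g * l2
  have hgl1 : ∑ t ∈ S₂, g t * l1 t = mu * L₁ := by
    rw [← Finset.sum_subset hsub (fun t _ ht => by rw [h1supp t ht, mul_zero])]
    rw [← h1sum, Finset.mul_sum]
    refine Finset.sum_congr rfl (fun t ht => ?_)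
    rcases (h1pos t).lt_or_eq with hpos | hzero
    · rw [hmu_eq t ht hpos]
    · rw [← hzero, mul_zero, mul_zero]
  have hgl2 : ∑ t ∈ S₂, g t * l2 t = lam * L₂ := by
    rw [← h2sum, Finset.mul_sum]
    refine Finset.sum_congr rfl (fun t ht => ?_)
    rcases (h2pos t).lt_or_eq with hpos | hzero
    · rw [hlam_eq t ht hpos]
    · rw [← hzero, mul_zero, mul_zero]
  have hgm1 : mu * L₁ ≤ ∑ t ∈ S₂, g t * m1 t := by
    rw [← Finset.sum_subset hsub (fun t _ ht => by rw [hm1supp t ht, mul_zero])]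
    rw [← hm1sum, Finset.mul_sum]
    exact Finset.sum_le_sum (fun t ht =>
      mul_le_mul_of_nonneg_right (hmu_min t ht) (hm1pos t))
  have hgm2 : lam * L₂ ≤ ∑ t ∈ S₂, g t * m2 t := by
    rw [← hm2sum, Finset.mul_sum]
    exact Finset.sum_le_sum (fun t ht =>
      mul_le_mul_of_nonneg_right (hlam_min t ht) (hm2pos t))
  -- gradient inequality summed
  have hgrad : ∑ t ∈ S₂, f (ℓ0 t + l1 t + l2 t)
      + ∑ t ∈ S₂, g t * (m1 t + m2 t - l1 t - l2 t)
      ≤ ∑ t ∈ S₂, f (ℓ0 t + m1 t + m2 t) := by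
    have := Finset.sum_le_sum (f := fun t => f (ℓ0 t + l1 t + l2 t)
        + g t * (m1 t + m2 t - l1 t - l2 t))
      (g := fun t => f (ℓ0 t + m1 t + m2 t)) (s := S₂) (fun t _ => by
        have h := grad_ineq6 hf_conv hf_diff (ℓ0 t + l1 t + l2 t) (ℓ0 t + m1 t + m2 t)
        have e : ℓ0 t + m1 t + m2 t - (ℓ0 t + l1 t + l2 t)
            = m1 t + m2 t - l1 t - l2 t := by ring
        rw [e] at h
        simp only [hg]
        linarith)
    rw [Finset.sum_add_distrib] at this
    exact this
  have hexp : ∑ t ∈ S₂, g t * (m1 t + m2 t - l1 t - l2 t)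
      = (∑ t ∈ S₂, g t * m1 t) + (∑ t ∈ S₂, g t * m2 t)
        - (∑ t ∈ S₂, g t * l1 t) - (∑ t ∈ S₂, g t * l2 t) := by
    rw [← Finset.sum_add_distrib, ← Finset.sum_sub_distrib, ← Finset.sum_sub_distrib]
    exact Finset.sum_congr rfl (fun t _ => by ring)
  rw [hexp, hgl1, hgl2] at hgrad
  linarith
end
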